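/- Let A be a reduced DFA avoiding pattern P_g (no distinct p ≠ q and nonempty words x, y with p·x = p, q·x = q, p·y = q). Then every nontrivial component of A is a sink, and for every nonempty word u and every sink C, the restriction of the action of u to C is non-permutational. -/
import Mathlib


/-- State `q` is reachable from `p` in the DFA `M`. -/
def Reach {α σ : Type*} (M : DFA α σ) (p q : σ) : Prop :=
  ∃ x : List α, M.evalFrom p x = q

/-- A DFA is reduced if it is connected and all pairs of distinct states are
distinguishable by some word. -/
def Reduced {α σ : Type*} (M : DFA α σ) : Prop :=
  (∀ q : σ, ∃ x : List α, M.evalFrom M.start x = q) ∧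
  (∀ p q : σ, p ≠ q → ∃ w : List α,
    ¬ (M.evalFrom p w ∈ M.accept ↔ M.evalFrom q w ∈ M.accept))

/-- `C` is a strongly connected component (class of mutual reachability) of `M`. -/
def IsComponent {α σ : Type*} (M : DFA α σ) (C : Set σ) : Prop :=
  ∃ p : σ, C = {q | Reach M p q ∧ Reach M q p}

/-- A component is a sink if it is closed under all letters. -/
def IsSink {α σ : Type*} (M : DFA α σ) (C : Set σ) : Prop :=
  IsComponent M C ∧ ∀ q ∈ C, ∀ a : α, M.step q a ∈ C

/-- A component is trivial if it is a singleton `{p}` with `p·a ≠ p` for every letter `a`. -/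
def IsTrivialComponent {α σ : Type*} (M : DFA α σ) (C : Set σ) : Prop :=
  IsComponent M C ∧ ∃ p : σ, C = {p} ∧ ∀ a : α, M.step p a ≠ p

/-- `f` is non-permutational on `C`: no subset `D ⊆ C` with `|D| > 1` is mapped
bijectively onto itself by `f`. -/
def NonPermutationalOn {σ : Type*} (f : σ → σ) (C : Set σ) : Prop :=
  ¬ ∃ D : Set σ, D ⊆ C ∧ 1 < D.ncard ∧ Set.BijOn f D D

/-- The automaton avoids pattern `P_d`. -/
def AvoidsPd {α σ : Type*} (M : DFA α σ) : Prop :=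
  ¬ ∃ (p q : σ) (x : List α), p ≠ q ∧ x ≠ [] ∧
    M.evalFrom p x = p ∧ M.evalFrom q x = q

/-- The automaton avoids pattern `P_g`. -/
def AvoidsPg {α σ : Type*} (M : DFA α σ) : Prop :=
  ¬ ∃ (p q : σ) (x y : List α), p ≠ q ∧ x ≠ [] ∧ y ≠ [] ∧
    M.evalFrom p x = p ∧ M.evalFrom q x = q ∧ M.evalFrom p y = q


theorem DFA.evalFrom_append' {α σ : Type*} (M : DFA α σ) (s : σ) (x y : List α) :
    M.evalFrom s (x ++ y) = M.evalFrom (M.evalFrom s x) y := by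
  simp [DFA.evalFrom, List.foldl_append]

theorem evalFrom_join_replicate {α σ : Type*} (M : DFA α σ) (x : List α) (n : ℕ) (s : σ) :
    M.evalFrom s ((List.replicate n x).flatten) = (fun t => M.evalFrom t x)^[n] s := by
  induction n generalizing s with
  | zero => simp [DFA.evalFrom]
  | succ k ih =>
    rw [List.replicate_succ, List.flatten_cons, DFA.evalFrom_append', ih,
      Function.iterate_succ_apply]

theorem join_replicate_ne_nil {α : Type*} {x : List α} {n : ℕ} (hn : 0 < n) (hx : x ≠ []) :
    (List.replicate n x).flatten ≠ [] := by
  cases n with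
  | zero => omega
  | succ k =>
    rw [List.replicate_succ, List.flatten_cons]
    intro h
    exact hx (List.append_eq_nil_iff.mp h).1

theorem exists_pos_iterate_eq {σ : Type*} [Finite σ] (f : σ → σ) (r : σ) :
    ∃ (i n : ℕ), 0 < n ∧ f^[n] (f^[i] r) = f^[i] r := by
  obtain ⟨i, j, hne, heq⟩ := Finite.exists_ne_map_eq_of_infinite (fun i : ℕ => f^[i] r)
  rcases hne.lt_or_gt with h | h
  · refine ⟨i, j - i, by omega, ?_⟩
    rw [← Function.iterate_add_apply]
    rw [show j - i + i = j by omega, heq]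
  · refine ⟨j, i - j, by omega, ?_⟩
    rw [← Function.iterate_add_apply]
    rw [show i - j + j = i by omega, heq]

theorem reach_trans' {α σ : Type*} (M : DFA α σ) {p q r : σ}
    (h1 : Reach M p q) (h2 : Reach M q r) : Reach M p r := by
  obtain ⟨x, hx⟩ := h1; obtain ⟨y, hy⟩ := h2
  exact ⟨x ++ y, by rw [DFA.evalFrom_append', hx, hy]⟩

theorem bijOn_iterate {σ : Type*} {f : σ → σ} {D : Set σ} (h : Set.BijOn f D D) (n : ℕ) :
    Set.BijOn f^[n] D D := by
  induction n with
  | zero => simpa using Set.bijOn_id D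
  | succ k ih => rw [Function.iterate_succ']; exact h.comp ih

theorem exists_pos_iterate_fixed_of_bijOn {σ : Type*} [Finite σ] {f : σ → σ} {D : Set σ}
    (h : Set.BijOn f D D) {p : σ} (hp : p ∈ D) : ∃ n, 0 < n ∧ f^[n] p = p := by
  obtain ⟨i, n, hn, heq⟩ := exists_pos_iterate_eq f p
  refine ⟨n, hn, (bijOn_iterate h i).injOn ((bijOn_iterate h n).mapsTo hp) hp ?_⟩
  rw [← Function.iterate_add_apply, show i + n = n + i by omega,
    Function.iterate_add_apply]
  exact heq

theorem sinks_of_avoids_Pg {α σ : Type*} [Fintype σ] (M : DFA α σ)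
    (hred : Reduced M) (havoid : AvoidsPg M) :
    (∀ C : Set σ, IsComponent M C → ¬ IsTrivialComponent M C → IsSink M C) ∧
    (∀ u : List α, u ≠ [] → ∀ C : Set σ, IsSink M C →
      NonPermutationalOn (fun q => M.evalFrom q u) C) := by
  constructor
  · -- every nontrivial component is a sink
    rintro C hC htriv
    refine ⟨hC, ?_⟩
    intro q hqC a
    by_contra hr
    obtain ⟨p0, hC0⟩ := hC
    set r := M.step q a with hr_def
    have hra : M.evalFrom q [a] = r := by simp [DFA.evalFrom, hr_def]
    -- a nonempty cycle at q
    have hcyc : ∃ x : List α, x ≠ [] ∧ M.evalFrom q x = q := by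
      by_cases hsing : ∀ t ∈ C, t = q
      · have hCq : C = {q} := Set.eq_singleton_iff_unique_mem.mpr ⟨hqC, hsing⟩
        have : ¬ ∀ b : α, M.step q b ≠ q := fun h => htriv ⟨⟨p0, hC0⟩, q, hCq, h⟩
        push_neg at this
        obtain ⟨b, hb⟩ := this
        exact ⟨[b], by simp, by simp [DFA.evalFrom, hb]⟩
      · push_neg at hsing
        obtain ⟨t, htC, htq⟩ := hsing
        rw [hC0] at hqC htC
        obtain ⟨y1, hy1⟩ := reach_trans' M hqC.2 htC.1
        obtain ⟨y2, hy2⟩ := reach_trans' M htC.2 hqC.1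
        refine ⟨y1 ++ y2, ?_, by rw [DFA.evalFrom_append', hy1, hy2]⟩
        intro h
        rcases List.append_eq_nil_iff.mp h with ⟨h1, _⟩
        exact htq (by rw [← hy1, h1]; simp [DFA.evalFrom])
    obtain ⟨x, hxne, hxq⟩ := hcyc
    set f : σ → σ := fun t => M.evalFrom t x with hf
    obtain ⟨i, n, hn, heq⟩ := exists_pos_iterate_eq f r
    set s := f^[i] r with hs
    have hqs : q ≠ s := by
      intro h
      apply hr
      rw [hC0] at hqC ⊢
      have hrq : Reach M r q := ⟨(List.replicate i x).flatten, by
        rw [evalFrom_join_replicate, ← hf, ← hs, ← h]⟩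
      have hqr : Reach M q r := ⟨[a], hra⟩
      exact ⟨reach_trans' M hqC.1 hqr, reach_trans' M hrq hqC.2⟩
    apply havoid
    refine ⟨q, s, (List.replicate n x).flatten, a :: (List.replicate i x).flatten,
      hqs, join_replicate_ne_nil hn hxne, List.cons_ne_nil _ _, ?_, ?_, ?_⟩
    · rw [evalFrom_join_replicate, ← hf]
      have : f q = q := hxq
      exact Function.iterate_fixed this n
    · rw [evalFrom_join_replicate, ← hf]
      exact heq
    · have : (a :: (List.replicate i x).flatten) = [a] ++ (List.replicate i x).flatten := rfl
      rw [this, DFA.evalFrom_append', hra, evalFrom_join_replicate, ← hf, ← hs]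
  · -- non-permutational on sinks
    rintro u hu C ⟨⟨p0, hC0⟩, _⟩ ⟨D, hDC, hcard, hbij⟩
    have hDfin : D.Finite := Set.toFinite D
    obtain ⟨p, hpD, q, hqD, hpq⟩ := (Set.one_lt_ncard hDfin).mp hcard
    obtain ⟨n, hn, hpfix⟩ := exists_pos_iterate_fixed_of_bijOn hbij hpD
    obtain ⟨m, hm, hqfix⟩ := exists_pos_iterate_fixed_of_bijOn hbij hqD
    set f : σ → σ := fun t => M.evalFrom t u with hf
    have hN : 0 < n * m := Nat.mul_pos hn hm
    have hpN : f^[n * m] p = p := by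
      rw [Function.iterate_mul]
      exact Function.iterate_fixed hpfix m
    have hqN : f^[m * n] q = q := by
      rw [Function.iterate_mul]
      exact Function.iterate_fixed hqfix n
    rw [Nat.mul_comm] at hqN
    have hpC := hDC hpD
    have hqC := hDC hqD
    rw [hC0] at hpC hqC
    obtain ⟨y, hy⟩ := reach_trans' M hpC.2 hqC.1
    apply havoid
    refine ⟨p, q, (List.replicate (n * m) u).flatten, y, hpq,
      join_replicate_ne_nil hN hu, ?_, ?_, ?_, hy⟩
    · intro h
      apply hpq
      rw [← hy, h]
      simp [DFA.evalFrom]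
    · rw [evalFrom_join_replicate, ← hf]; exact hpN
    · rw [evalFrom_join_replicate, ← hf]; exact hqN
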